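/- Let H be an N×N Hermitian matrix (indexed by a finite set) such that for all x, |H_{xy}|² = (1/(M-1)) · 1[1 ≤ |x-y| ≤ W] deterministically, where the indicator set has exactly M elements for each fixed x (periodic lattice). Define the nonbacktracking powers H^{(n)}_{x_0 x_n} := Σ'_{x_1,…,x_{n-1}} H_{x_0 x_1}⋯H_{x_{n-1}x_n}, where the primed sum imposes x_i ≠ x_{i+2} for 0 ≤ i ≤ n-2. Then H^{(0)} = I, H^{(1)} = H, H^{(2)} = H² − (M/(M-1))·I, and for all n ≥ 3, H^{(n)} = H·H^{(n-1)} − H^{(n-2)}. -/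

import Mathlib

open Classical in
/-- The `n`-th nonbacktracking power of a matrix:
`H^{(n)}_{x y} = Σ'_{x_1,…,x_{n-1}} H_{x x_1} ⋯ H_{x_{n-1} y}`, where the primed sum
imposes `x_i ≠ x_{i+2}` for `0 ≤ i ≤ n-2`. -/
noncomputable def nbPow {ι : Type*} [Fintype ι] [DecidableEq ι]
    (H : Matrix ι ι ℂ) (n : ℕ) : Matrix ι ι ℂ :=
  Matrix.of fun x y =>
    ∑ p : Fin (n + 1) → ι,
      if p 0 = x ∧ p (Fin.last n) = y ∧
          (∀ i : ℕ, ∀ h : i + 2 ≤ n, p ⟨i, by omega⟩ ≠ p ⟨i + 2, by omega⟩)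
      then ∏ i : Fin n, H (p i.castSucc) (p i.succ) else 0

set_option linter.unusedSectionVars false
set_option linter.unusedVariables false

namespace NBaux

open Classical Finset

variable {ι : Type*} [Fintype ι] [DecidableEq ι]

lemma sum_pi_succ (n : ℕ) (f : (Fin (n+1) → ι) → ℂ) :
    ∑ p : Fin (n+1) → ι, f p = ∑ z : ι, ∑ q : Fin n → ι, f (Fin.cons z q) := by
  rw [← Equiv.sum_comp (Fin.consEquiv fun _ => ι) f, Fintype.sum_prod_type]; rfl

lemma nb_cons (n : ℕ) (z : ι) (q : Fin (n+2) → ι) :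
    (∀ i : ℕ, ∀ h : i + 2 ≤ n + 2, (Fin.cons z q : Fin (n+3) → ι) ⟨i, by omega⟩ ≠
        (Fin.cons z q : Fin (n+3) → ι) ⟨i + 2, by omega⟩) ↔
      (z ≠ q ⟨1, by omega⟩ ∧
        ∀ i : ℕ, ∀ h : i + 2 ≤ n + 1, q ⟨i, by omega⟩ ≠ q ⟨i + 2, by omega⟩) := by
  constructor
  · intro hp
    constructor
    · exact hp 0 (by omega)
    · exact fun i h => hp (i+1) (by omega)
  · rintro ⟨h1, h2⟩ i h
    cases i with
    | zero => exact h1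
    | succ j => exact h2 j (by omega)

lemma prod_cons (n : ℕ) (H : Matrix ι ι ℂ) (z : ι) (q : Fin (n+2) → ι) :
    (∏ i : Fin (n+2), H ((Fin.cons z q : Fin (n+3) → ι) i.castSucc)
        ((Fin.cons z q : Fin (n+3) → ι) i.succ))
      = H z (q 0) * ∏ i : Fin (n+1), H (q i.castSucc) (q i.succ) := by
  rw [Fin.prod_univ_succ]; rfl

end NBaux

namespace NBaux
open Classical Finset
variable {ι : Type*} [Fintype ι] [DecidableEq ι]

open Classical in
lemma mulExpand (H : Matrix ι ι ℂ) (n : ℕ) (x y : ι) :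
    (H * nbPow H (n+1)) x y =
      ∑ q : Fin (n+2) → ι,
        if q (Fin.last (n+1)) = y ∧
            (∀ i : ℕ, ∀ h : i + 2 ≤ n + 1, q ⟨i, by omega⟩ ≠ q ⟨i + 2, by omega⟩)
        then H x (q 0) * ∏ i : Fin (n+1), H (q i.castSucc) (q i.succ) else 0 := by
  rw [Matrix.mul_apply]
  simp only [nbPow, Matrix.of_apply, Finset.mul_sum]
  rw [Finset.sum_comm]
  refine Finset.sum_congr rfl fun q _ => ?_
  by_cases hC : q (Fin.last (n+1)) = y ∧
      (∀ i : ℕ, ∀ h : i + 2 ≤ n + 1, q ⟨i, by omega⟩ ≠ q ⟨i + 2, by omega⟩)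
  · rw [if_pos hC]
    have : ∀ z : ι, (H x z * if q 0 = z ∧ q (Fin.last (n+1)) = y ∧
        (∀ i : ℕ, ∀ h : i + 2 ≤ n + 1, q ⟨i, by omega⟩ ≠ q ⟨i + 2, by omega⟩)
        then ∏ i : Fin (n+1), H (q i.castSucc) (q i.succ) else 0)
        = if q 0 = z then H x z * ∏ i : Fin (n+1), H (q i.castSucc) (q i.succ) else 0 := by
      intro z
      by_cases hz : q 0 = z
      · rw [if_pos ⟨hz, hC⟩, if_pos hz]
      · rw [if_neg (fun h => hz h.1), if_neg hz, mul_zero]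
    rw [Finset.sum_congr rfl fun z _ => this z, Finset.sum_ite_eq Finset.univ (q 0)
      (fun z => H x z * ∏ i : Fin (n+1), H (q i.castSucc) (q i.succ)), if_pos (Finset.mem_univ _)]
  · rw [if_neg hC]
    refine Finset.sum_eq_zero fun z _ => ?_
    rw [if_neg (fun h => hC h.2), mul_zero]
end NBaux

namespace NBaux
open Classical Finset
variable {ι : Type*} [Fintype ι] [DecidableEq ι]

open Classical in
lemma consDecomp (H : Matrix ι ι ℂ) (n : ℕ) (x y : ι) :
    nbPow H (n+2) x y =
      ∑ q : Fin (n+2) → ι,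
        if q (Fin.last (n+1)) = y ∧
            (∀ i : ℕ, ∀ h : i + 2 ≤ n + 1, q ⟨i, by omega⟩ ≠ q ⟨i + 2, by omega⟩) ∧
            x ≠ q ⟨1, by omega⟩
        then H x (q 0) * ∏ i : Fin (n+1), H (q i.castSucc) (q i.succ) else 0 := by
  simp only [nbPow, Matrix.of_apply]
  rw [sum_pi_succ]
  have key : ∀ z : ι, ∀ q : Fin (n+2) → ι,
      (if (Fin.cons z q : Fin (n+3) → ι) 0 = x ∧
          (Fin.cons z q : Fin (n+3) → ι) (Fin.last (n+2)) = y ∧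
          (∀ i : ℕ, ∀ h : i + 2 ≤ n + 2, (Fin.cons z q : Fin (n+3) → ι) ⟨i, by omega⟩ ≠
            (Fin.cons z q : Fin (n+3) → ι) ⟨i + 2, by omega⟩)
        then ∏ i : Fin (n+2), H ((Fin.cons z q : Fin (n+3) → ι) i.castSucc)
          ((Fin.cons z q : Fin (n+3) → ι) i.succ) else 0)
      = if z = x then
          (if q (Fin.last (n+1)) = y ∧
              (∀ i : ℕ, ∀ h : i + 2 ≤ n + 1, q ⟨i, by omega⟩ ≠ q ⟨i + 2, by omega⟩) ∧
              x ≠ q ⟨1, by omega⟩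
          then H x (q 0) * ∏ i : Fin (n+1), H (q i.castSucc) (q i.succ) else 0) else 0 := by
    intro z q
    by_cases hz : z = x
    · subst hz
      rw [if_pos rfl]
      refine if_congr ?_ (prod_cons n H z q) rfl
      rw [nb_cons]
      constructor
      · rintro ⟨-, hy, hne, hnb⟩; exact ⟨hy, hnb, hne⟩
      · rintro ⟨hy, hnb, hne⟩; exact ⟨rfl, hy, hne, hnb⟩
    · rw [if_neg hz, if_neg]
      intro h
      exact hz h.1
  rw [Finset.sum_congr rfl fun z _ => Finset.sum_congr rfl fun q _ => key z q,
    ← Finset.sum_comm]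
  rw [Finset.sum_congr rfl fun q _ => Finset.sum_ite_eq' Finset.univ x _]
  exact Finset.sum_congr rfl fun q _ => if_pos (Finset.mem_univ x)
end NBaux

namespace NBaux
open Classical Finset
variable {ι : Type*} [Fintype ι] [DecidableEq ι]
variable {H : Matrix ι ι ℂ} {A : ι → ι → Prop} {M : ℕ}

open Classical in
lemma pair_eq (hHerm : H.IsHermitian)
    (hH : ∀ x y, ‖H x y‖ ^ 2 = if A x y then 1 / ((M : ℝ) - 1) else 0) (x z : ι) :
    H x z * H z x = if A x z then 1 / ((M : ℂ) - 1) else 0 := by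
  rw [← hHerm.apply z x, show star (H x z) = (starRingEnd ℂ) (H x z) from rfl,
    Complex.mul_conj, Complex.normSq_eq_norm_sq, hH x z]
  split_ifs <;> push_cast <;> ring

open Classical in
lemma card_filter (hcard : ∀ x, Nat.card {y // A x y} = M) (x : ι) :
    (Finset.univ.filter (fun z => A x z)).card = M := by
  have := hcard x
  rwa [Nat.card_eq_fintype_card, Fintype.card_subtype] at this

open Classical in
lemma sum_pair (hM : 2 ≤ M) (hHerm : H.IsHermitian)
    (hcard : ∀ x, Nat.card {y // A x y} = M)
    (hH : ∀ x y, ‖H x y‖ ^ 2 = if A x y then 1 / ((M : ℝ) - 1) else 0) (x : ι) :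
    ∑ z : ι, H x z * H z x = (M : ℂ) / ((M : ℂ) - 1) := by
  rw [Finset.sum_congr rfl fun z _ => pair_eq hHerm hH x z,
    Finset.sum_ite, Finset.sum_const, Finset.sum_const_zero, add_zero,
    card_filter hcard x, nsmul_eq_mul, mul_one_div]

open Classical in
lemma sum_pair_ne (hM : 2 ≤ M) (hHerm : H.IsHermitian)
    (hcard : ∀ x, Nat.card {y // A x y} = M)
    (hH : ∀ x y, ‖H x y‖ ^ 2 = if A x y then 1 / ((M : ℝ) - 1) else 0)
    (x w : ι) (hA : A x w) :
    ∑ z : ι, (if z ≠ w then H x z * H z x else 0) = 1 := by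
  have step : ∀ z : ι, (if z ≠ w then H x z * H z x else 0)
      = if A x z ∧ z ≠ w then 1 / ((M : ℂ) - 1) else 0 := by
    intro z
    rw [pair_eq hHerm hH x z]
    split_ifs with h1 h2 h3 h4 <;> tauto
  rw [Finset.sum_congr rfl fun z _ => step z, Finset.sum_ite, Finset.sum_const,
    Finset.sum_const_zero, add_zero, nsmul_eq_mul]
  have hfil : Finset.univ.filter (fun z => A x z ∧ z ≠ w)
      = (Finset.univ.filter (fun z => A x z)).erase w := by
    ext z; simp [Finset.mem_erase, and_comm]
  have hw : w ∈ Finset.univ.filter (fun z => A x z) := by simp [hA]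
  rw [hfil, Finset.card_erase_of_mem hw, card_filter hcard x]
  have hM1 : ((M : ℂ) - 1) ≠ 0 := by
    have h1 : ((M : ℂ)) ≠ 1 := by
      exact_mod_cast (by omega : M ≠ 1)
    exact sub_ne_zero.mpr h1
  have : ((M - 1 : ℕ) : ℂ) = (M : ℂ) - 1 := by
    push_cast [Nat.cast_sub (by omega : 1 ≤ M)]; ring
  rw [this, mul_one_div, div_self hM1]
end NBaux

namespace NBaux
open Classical Finset
variable {ι : Type*} [Fintype ι] [DecidableEq ι]
variable {H : Matrix ι ι ℂ} {A : ι → ι → Prop} {M : ℕ}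

open Classical in
lemma diffStep (H : Matrix ι ι ℂ) (n : ℕ) (x y : ι) :
    (H * nbPow H (n+2)) x y - nbPow H (n+3) x y
      = ∑ q : Fin (n+3) → ι,
          if q (Fin.last (n+2)) = y ∧
              (∀ i : ℕ, ∀ h : i + 2 ≤ n + 2, q ⟨i, by omega⟩ ≠ q ⟨i + 2, by omega⟩) ∧
              x = q ⟨1, by omega⟩
          then H x (q 0) * ∏ i : Fin (n+2), H (q i.castSucc) (q i.succ) else 0 := by
  rw [mulExpand H (n+1) x y, consDecomp H (n+1) x y, ← Finset.sum_sub_distrib]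
  refine Finset.sum_congr rfl fun q _ => ?_
  by_cases hC : q (Fin.last (n+2)) = y ∧
      (∀ i : ℕ, ∀ h : i + 2 ≤ n + 2, q ⟨i, by omega⟩ ≠ q ⟨i + 2, by omega⟩)
  · by_cases hx : x = q ⟨1, by omega⟩
    · rw [if_pos hC, if_neg (fun h => h.2.2 hx), if_pos ⟨hC.1, hC.2, hx⟩, sub_zero]
    · rw [if_pos hC, if_pos ⟨hC.1, hC.2, hx⟩, if_neg (fun h => hx h.2.2), sub_self]
  · rw [if_neg hC, if_neg (fun h => hC ⟨h.1, h.2.1⟩), if_neg (fun h => hC ⟨h.1, h.2.1⟩),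
      sub_self]

open Classical in
lemma backSum (hM : 2 ≤ M) (hHerm : H.IsHermitian)
    (hcard : ∀ x, Nat.card {y // A x y} = M)
    (hH : ∀ x y, ‖H x y‖ ^ 2 = if A x y then 1 / ((M : ℝ) - 1) else 0)
    (n : ℕ) (x y : ι) :
    (∑ q : Fin (n+3) → ι,
        if q (Fin.last (n+2)) = y ∧
            (∀ i : ℕ, ∀ h : i + 2 ≤ n + 2, q ⟨i, by omega⟩ ≠ q ⟨i + 2, by omega⟩) ∧
            x = q ⟨1, by omega⟩
        then H x (q 0) * ∏ i : Fin (n+2), H (q i.castSucc) (q i.succ) else 0)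
      = nbPow H (n+1) x y := by
  rw [sum_pi_succ]
  have key : ∀ z : ι, ∀ r : Fin (n+2) → ι,
      (if (Fin.cons z r : Fin (n+3) → ι) (Fin.last (n+2)) = y ∧
          (∀ i : ℕ, ∀ h : i + 2 ≤ n + 2, (Fin.cons z r : Fin (n+3) → ι) ⟨i, by omega⟩ ≠
            (Fin.cons z r : Fin (n+3) → ι) ⟨i + 2, by omega⟩) ∧
          x = (Fin.cons z r : Fin (n+3) → ι) ⟨1, by omega⟩
        then H x ((Fin.cons z r : Fin (n+3) → ι) 0) *
          ∏ i : Fin (n+2), H ((Fin.cons z r : Fin (n+3) → ι) i.castSucc)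
            ((Fin.cons z r : Fin (n+3) → ι) i.succ) else 0)
      = if r (Fin.last (n+1)) = y ∧
            (z ≠ r ⟨1, by omega⟩ ∧
              ∀ i : ℕ, ∀ h : i + 2 ≤ n + 1, r ⟨i, by omega⟩ ≠ r ⟨i + 2, by omega⟩) ∧
            x = r 0
        then H x z * (H z (r 0) * ∏ i : Fin (n+1), H (r i.castSucc) (r i.succ)) else 0 := by
    intro z r
    refine if_congr ?_ ?_ rfl
    · rw [nb_cons]; exact Iff.rfl
    · rw [prod_cons n H z r, Fin.cons_zero]
  rw [Finset.sum_congr rfl fun z _ => Finset.sum_congr rfl fun r _ => key z r,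
    Finset.sum_comm]
  have inner : ∀ r : Fin (n+2) → ι,
      (∑ z : ι, if r (Fin.last (n+1)) = y ∧
            (z ≠ r ⟨1, by omega⟩ ∧
              ∀ i : ℕ, ∀ h : i + 2 ≤ n + 1, r ⟨i, by omega⟩ ≠ r ⟨i + 2, by omega⟩) ∧
            x = r 0
          then H x z * (H z (r 0) * ∏ i : Fin (n+1), H (r i.castSucc) (r i.succ)) else 0)
      = if r 0 = x ∧ r (Fin.last (n+1)) = y ∧
            (∀ i : ℕ, ∀ h : i + 2 ≤ n + 1, r ⟨i, by omega⟩ ≠ r ⟨i + 2, by omega⟩)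
        then ∏ i : Fin (n+1), H (r i.castSucc) (r i.succ) else 0 := by
    intro r
    by_cases hr : r 0 = x ∧ r (Fin.last (n+1)) = y ∧
        (∀ i : ℕ, ∀ h : i + 2 ≤ n + 1, r ⟨i, by omega⟩ ≠ r ⟨i + 2, by omega⟩)
    · obtain ⟨h0, hy, hnb⟩ := hr
      rw [if_pos ⟨h0, hy, hnb⟩]
      subst h0
      have step1 : (∑ z : ι, if r (Fin.last (n+1)) = y ∧
            (z ≠ r ⟨1, by omega⟩ ∧
              ∀ i : ℕ, ∀ h : i + 2 ≤ n + 1, r ⟨i, by omega⟩ ≠ r ⟨i + 2, by omega⟩) ∧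
            r 0 = r 0
          then H (r 0) z * (H z (r 0) * ∏ i : Fin (n+1), H (r i.castSucc) (r i.succ)) else 0)
          = (∑ z : ι, if z ≠ r ⟨1, by omega⟩ then H (r 0) z * H z (r 0) else 0) *
              ∏ i : Fin (n+1), H (r i.castSucc) (r i.succ) := by
        rw [Finset.sum_mul]
        refine Finset.sum_congr rfl fun z _ => ?_
        by_cases hz : z ≠ r ⟨1, by omega⟩
        · rw [if_pos ⟨hy, ⟨hz, hnb⟩, rfl⟩, if_pos hz]; ring
        · rw [if_neg (fun h => hz h.2.1.1), if_neg hz, zero_mul]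
      rw [step1]
      by_cases hA : A (r 0) (r ⟨1, by omega⟩)
      · rw [sum_pair_ne hM hHerm hcard hH _ _ hA, one_mul]
      · have hz : H (r 0) (r ⟨1, by omega⟩) = 0 := by
          have h2 := hH (r 0) (r ⟨1, by omega⟩)
          rw [if_neg hA, pow_eq_zero_iff (two_ne_zero), norm_eq_zero] at h2
          exact h2
        have hp : (∏ i : Fin (n+1), H (r i.castSucc) (r i.succ)) = 0 := by
          refine Finset.prod_eq_zero (Finset.mem_univ (0 : Fin (n+1))) ?_
          exact hz
        rw [hp, mul_zero]
    · rw [if_neg hr]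
      refine Finset.sum_eq_zero fun z _ => ?_
      rw [if_neg]
      rintro ⟨hy, ⟨hz, hnb⟩, hx⟩
      exact hr ⟨hx.symm, hy, hnb⟩
  rw [Finset.sum_congr rfl fun r _ => inner r]
  simp only [nbPow, Matrix.of_apply]
end NBaux

namespace NBaux
open Classical Finset
variable {ι : Type*} [Fintype ι] [DecidableEq ι]
variable {H : Matrix ι ι ℂ}

open Classical in
lemma nbPow_zero : nbPow H 0 = 1 := by
  ext x y
  simp only [nbPow, Matrix.of_apply]
  rw [sum_pi_succ]
  have key : ∀ z : ι, (∑ q : Fin 0 → ι,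
      if (Fin.cons z q : Fin 1 → ι) 0 = x ∧ (Fin.cons z q : Fin 1 → ι) (Fin.last 0) = y ∧
          (∀ i : ℕ, ∀ h : i + 2 ≤ 0, (Fin.cons z q : Fin 1 → ι) ⟨i, by omega⟩ ≠
            (Fin.cons z q : Fin 1 → ι) ⟨i + 2, by omega⟩)
      then ∏ i : Fin 0, H ((Fin.cons z q : Fin 1 → ι) i.castSucc)
        ((Fin.cons z q : Fin 1 → ι) i.succ) else 0)
      = if z = x ∧ z = y then 1 else 0 := by
    intro z
    rw [Fintype.sum_unique]
    refine if_congr ?_ (by simp) rfl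
    constructor
    · rintro ⟨h1, h2, -⟩; exact ⟨h1, h2⟩
    · rintro ⟨h1, h2⟩; exact ⟨h1, h2, fun i h => absurd h (by omega)⟩
  rw [Finset.sum_congr rfl fun z _ => key z]
  by_cases hxy : x = y
  · subst hxy
    rw [Matrix.one_apply_eq]
    rw [Finset.sum_congr rfl fun z _ => if_congr (by tauto) rfl rfl,
      Finset.sum_ite_eq' Finset.univ x (fun _ => (1 : ℂ)), if_pos (Finset.mem_univ x)]
  · rw [Matrix.one_apply_ne hxy]
    refine Finset.sum_eq_zero fun z _ => ?_
    rw [if_neg]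
    rintro ⟨rfl, h2⟩
    exact hxy h2

open Classical in
lemma nbPow_one : nbPow H 1 = H := by
  ext x y
  simp only [nbPow, Matrix.of_apply]
  rw [sum_pi_succ]
  have key : ∀ z : ι, (∑ q : Fin 1 → ι,
      if (Fin.cons z q : Fin 2 → ι) 0 = x ∧ (Fin.cons z q : Fin 2 → ι) (Fin.last 1) = y ∧
          (∀ i : ℕ, ∀ h : i + 2 ≤ 1, (Fin.cons z q : Fin 2 → ι) ⟨i, by omega⟩ ≠
            (Fin.cons z q : Fin 2 → ι) ⟨i + 2, by omega⟩)
      then ∏ i : Fin 1, H ((Fin.cons z q : Fin 2 → ι) i.castSucc)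
        ((Fin.cons z q : Fin 2 → ι) i.succ) else 0)
      = if z = x then H z y else 0 := by
    intro z
    rw [sum_pi_succ]
    have inner : ∀ w : ι, (∑ e : Fin 0 → ι,
        if (Fin.cons z (Fin.cons w e) : Fin 2 → ι) 0 = x ∧
            (Fin.cons z (Fin.cons w e) : Fin 2 → ι) (Fin.last 1) = y ∧
            (∀ i : ℕ, ∀ h : i + 2 ≤ 1, (Fin.cons z (Fin.cons w e) : Fin 2 → ι) ⟨i, by omega⟩ ≠
              (Fin.cons z (Fin.cons w e) : Fin 2 → ι) ⟨i + 2, by omega⟩)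
        then ∏ i : Fin 1, H ((Fin.cons z (Fin.cons w e) : Fin 2 → ι) i.castSucc)
          ((Fin.cons z (Fin.cons w e) : Fin 2 → ι) i.succ) else 0)
        = if z = x ∧ w = y then H z w else 0 := by
      intro w
      rw [Fintype.sum_unique]
      refine if_congr ?_ ?_ rfl
      · constructor
        · rintro ⟨h1, h2, -⟩; exact ⟨h1, h2⟩
        · rintro ⟨h1, h2⟩; exact ⟨h1, h2, fun i h => absurd h (by omega)⟩
      · rw [Fin.prod_univ_one]; rfl
    rw [Finset.sum_congr rfl fun w _ => inner w]
    by_cases hz : z = x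
    · rw [if_pos hz]
      rw [Finset.sum_congr rfl fun w _ => if_congr (by tauto) rfl rfl,
        Finset.sum_ite_eq' Finset.univ y (H z), if_pos (Finset.mem_univ y)]
    · rw [if_neg hz]
      exact Finset.sum_eq_zero fun w _ => if_neg (fun h => hz h.1)
  rw [Finset.sum_congr rfl fun z _ => key z,
    Finset.sum_ite_eq' Finset.univ x (fun z => H z y), if_pos (Finset.mem_univ x)]

open Classical in
lemma nbPow_two_apply (x y : ι) :
    nbPow H 2 x y = if x = y then 0 else ∑ w : ι, H x w * H w y := by
  have h0 : nbPow H 2 x y = nbPow H (0+2) x y := rfl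
  rw [h0, consDecomp H 0 x y, sum_pi_succ]
  have key : ∀ w : ι, (∑ r : Fin 1 → ι,
      if (Fin.cons w r : Fin 2 → ι) (Fin.last 1) = y ∧
          (∀ i : ℕ, ∀ h : i + 2 ≤ 0 + 1, (Fin.cons w r : Fin 2 → ι) ⟨i, by omega⟩ ≠
            (Fin.cons w r : Fin 2 → ι) ⟨i + 2, by omega⟩) ∧
          x ≠ (Fin.cons w r : Fin 2 → ι) ⟨1, by omega⟩
      then H x ((Fin.cons w r : Fin 2 → ι) 0) * ∏ i : Fin 1,
        H ((Fin.cons w r : Fin 2 → ι) i.castSucc) ((Fin.cons w r : Fin 2 → ι) i.succ) else 0)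
      = if x = y then 0 else H x w * H w y := by
    intro w
    rw [sum_pi_succ]
    have inner : ∀ v : ι, (∑ e : Fin 0 → ι,
        if (Fin.cons w (Fin.cons v e) : Fin 2 → ι) (Fin.last 1) = y ∧
            (∀ i : ℕ, ∀ h : i + 2 ≤ 0 + 1,
              (Fin.cons w (Fin.cons v e) : Fin 2 → ι) ⟨i, by omega⟩ ≠
              (Fin.cons w (Fin.cons v e) : Fin 2 → ι) ⟨i + 2, by omega⟩) ∧
            x ≠ (Fin.cons w (Fin.cons v e) : Fin 2 → ι) ⟨1, by omega⟩
        then H x ((Fin.cons w (Fin.cons v e) : Fin 2 → ι) 0) * ∏ i : Fin 1,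
          H ((Fin.cons w (Fin.cons v e) : Fin 2 → ι) i.castSucc)
            ((Fin.cons w (Fin.cons v e) : Fin 2 → ι) i.succ) else 0)
        = if v = y ∧ x ≠ v then H x w * H w v else 0 := by
      intro v
      rw [Fintype.sum_unique]
      refine if_congr ?_ ?_ rfl
      · constructor
        · rintro ⟨h1, -, h3⟩; exact ⟨h1, h3⟩
        · rintro ⟨h1, h3⟩; exact ⟨h1, fun i h => absurd h (by omega), h3⟩
      · rw [Fin.prod_univ_one]; rfl
    rw [Finset.sum_congr rfl fun v _ => inner v]
    have merge : ∀ v : ι, (if v = y ∧ x ≠ v then H x w * H w v else 0)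
        = if v = y then (if x = y then 0 else H x w * H w v) else 0 := by
      intro v
      by_cases hv : v = y
      · subst hv
        by_cases hxv : x = v
        · rw [if_neg (fun h => h.2 hxv), if_pos rfl, if_pos hxv]
        · rw [if_pos ⟨rfl, hxv⟩, if_pos rfl, if_neg hxv]
      · rw [if_neg (fun h => hv h.1), if_neg hv]
    rw [Finset.sum_congr rfl fun v _ => merge v,
      Finset.sum_ite_eq' Finset.univ y (fun v => if x = y then 0 else H x w * H w v),
      if_pos (Finset.mem_univ y)]
  rw [Finset.sum_congr rfl fun w _ => key w]
  by_cases hxy : x = y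
  · rw [if_pos hxy]
    exact Finset.sum_eq_zero fun w _ => if_pos hxy
  · rw [if_neg hxy]
    exact Finset.sum_congr rfl fun w _ => if_neg hxy
end NBaux

open Classical in
/-- Nonbacktracking powers of a Hermitian band-type matrix with
`|H_{xy}|² = (M-1)^{-1} 1[x ~ y]` (each row having exactly `M` neighbours) satisfy
`H^{(0)} = I`, `H^{(1)} = H`, `H^{(2)} = H² − (M/(M-1)) I` and, for `n ≥ 3`,
`H^{(n)} = H H^{(n-1)} − H^{(n-2)}`. -/
theorem nbPow_recursion {ι : Type*} [Fintype ι] [DecidableEq ι]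
    (H : Matrix ι ι ℂ) (A : ι → ι → Prop) (M : ℕ) (hM : 2 ≤ M)
    (hHerm : H.IsHermitian)
    (hAsymm : ∀ x y, A x y ↔ A y x)
    (hAirr : ∀ x, ¬ A x x)
    (hcard : ∀ x, Nat.card {y // A x y} = M)
    (hH : ∀ x y, ‖H x y‖ ^ 2 = if A x y then 1 / ((M : ℝ) - 1) else 0) :
    nbPow H 0 = 1 ∧ nbPow H 1 = H ∧
      nbPow H 2 = H ^ 2 - ((M : ℂ) / ((M : ℂ) - 1)) • (1 : Matrix ι ι ℂ) ∧
      ∀ n : ℕ, 3 ≤ n → nbPow H n = H * nbPow H (n - 1) - nbPow H (n - 2) := by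

  refine ⟨NBaux.nbPow_zero, NBaux.nbPow_one, ?_, ?_⟩
  · ext x y
    rw [NBaux.nbPow_two_apply x y, Matrix.sub_apply, Matrix.smul_apply, pow_two,
      Matrix.mul_apply]
    by_cases hxy : x = y
    · subst hxy
      rw [if_pos rfl, Matrix.one_apply_eq, NBaux.sum_pair hM hHerm hcard hH x,
        smul_eq_mul, mul_one, sub_self]
    · rw [if_neg hxy, Matrix.one_apply_ne hxy, smul_zero, sub_zero]
  · intro n hn
    obtain ⟨m, rfl⟩ : ∃ m, n = m + 3 := ⟨n - 3, by omega⟩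
    have e1 : m + 3 - 1 = m + 2 := rfl
    have e2 : m + 3 - 2 = m + 1 := rfl
    rw [e1, e2]
    ext x y
    have hd := NBaux.diffStep H m x y
    rw [NBaux.backSum hM hHerm hcard hH m x y] at hd
    rw [Matrix.sub_apply]
    linear_combination -hd
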